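/- (Effective additive Hilbert 90.) Let d := ord(y_G') (the order of the different of k[[t]]^G ⊆ k[[t]]), and let m, n be integers with m ≥ n and m − n ≥ d − #G + 1, so that I := t^m·k[[t]] ⊆ J := t^n·k[[t]] are fractional ideals of k[[t]] (both stable under all ρ(g)). Then every 1-cocycle with values in I becomes a coboundary in J: for every map a : G → I satisfying a_{gh} = ρ(g)(a_h) + a_g for all g, h ∈ G, there exists α ∈ J with a_g = ρ(g)(α) − α for all g ∈ G. In particular, the natural map H^1(G, I) → H^1(G, J) is zero. -/

import Mathlib

open PowerSeries

/-- the canonical embedding `k[[t]] → k((t))`. -/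
noncomputable def toL {k : Type} [Field k] (x : PowerSeries k) : LaurentSeries k :=
  HahnSeries.ofPowerSeries ℤ k x

/-- `ord(x) ≥ n` for the `t`-adic valuation on `k((t))` (with `ord 0 = ∞`). -/
def ordGE {k : Type} [Field k] (x : LaurentSeries k) (n : ℤ) : Prop :=
  x = 0 ∨ n ≤ HahnSeries.order x

namespace Stmt11

variable {k : Type} [Field k]

lemma toL_coeff (f : PowerSeries k) (i : ℤ) :
    (toL f).coeff i = if i < 0 then 0 else PowerSeries.coeff i.natAbs f :=
  PowerSeries.coeff_coe f i

lemma toL_injective : Function.Injective (toL (k := k)) :=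
  HahnSeries.ofPowerSeries_injective

lemma toL_ne_zero {f : PowerSeries k} (hf : f ≠ 0) : toL f ≠ 0 := by
  intro h
  apply hf; apply toL_injective; rw [h]; simp [toL]

lemma ordGE_iff {x : LaurentSeries k} {r : ℤ} :
    ordGE x r ↔ ∀ s < r, x.coeff s = 0 := by
  constructor
  · rintro (rfl | h) s hs
    · simp
    · exact HahnSeries.coeff_eq_zero_of_lt_order (lt_of_lt_of_le hs h)
  · intro h
    by_cases hx : x = 0
    · exact Or.inl hx
    · refine Or.inr ?_
      by_contra hlt
      exact (HahnSeries.coeff_order_eq_zero.not.mpr hx) (h _ (not_le.mp hlt))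

lemma ordGE_mono {x : LaurentSeries k} {r r' : ℤ} (h : r' ≤ r) (hx : ordGE x r) :
    ordGE x r' := by
  rw [ordGE_iff] at hx ⊢
  exact fun s hs => hx s (lt_of_lt_of_le hs h)

lemma ordGE_zero (r : ℤ) : ordGE (0 : LaurentSeries k) r := Or.inl rfl

lemma ordGE_add {x y : LaurentSeries k} {r : ℤ} (hx : ordGE x r) (hy : ordGE y r) :
    ordGE (x + y) r := by
  rw [ordGE_iff] at hx hy ⊢
  intro s hs
  simp [hx s hs, hy s hs]

lemma ordGE_neg {x : LaurentSeries k} {r : ℤ} (hx : ordGE x r) : ordGE (-x) r := by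
  rw [ordGE_iff] at hx ⊢
  intro s hs
  simp [hx s hs]

lemma ordGE_sum {ι : Type*} {s : Finset ι} {f : ι → LaurentSeries k} {r : ℤ}
    (h : ∀ i ∈ s, ordGE (f i) r) : ordGE (∑ i ∈ s, f i) r := by
  classical
  induction s using Finset.induction_on with
  | empty => simpa using ordGE_zero r
  | insert a s' hni ih =>
    rw [Finset.sum_insert hni]
    exact ordGE_add (h a (Finset.mem_insert_self a s'))
      (ih fun i hi => h i (Finset.mem_insert_of_mem hi))

lemma ordGE_of_order_eq {x : LaurentSeries k} {r : ℤ} (h : x.order = r) : ordGE x r :=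
  Or.inr h.ge

lemma ordGE_mul {x y : LaurentSeries k} {r s : ℤ} (hx : ordGE x r) (hy : ordGE y s) :
    ordGE (x * y) (r + s) := by
  rcases hx with rfl | hx
  · simpa using ordGE_zero _
  rcases hy with rfl | hy
  · simpa using ordGE_zero _
  by_cases hx0 : x = 0
  · simpa [hx0] using ordGE_zero _
  by_cases hy0 : y = 0
  · simpa [hy0] using ordGE_zero _
  refine Or.inr ?_
  rw [HahnSeries.order_mul hx0 hy0]
  exact add_le_add hx hy

lemma order_inv {x : LaurentSeries k} (hx : x ≠ 0) : (x⁻¹).order = -x.order := by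
  have hxi : x⁻¹ ≠ 0 := inv_ne_zero hx
  have h := HahnSeries.order_mul hxi hx
  rw [inv_mul_cancel₀ hx, HahnSeries.order_one] at h
  linarith [h]

lemma ordGE_toL {f : PowerSeries k} {r : ℕ} (h : (r : ℕ∞) ≤ f.order) :
    ordGE (toL f) r := by
  rw [ordGE_iff]
  intro s hs
  rw [toL_coeff]
  split_ifs with h0
  · rfl
  · apply PowerSeries.coeff_of_lt_order
    refine lt_of_lt_of_le ?_ h
    have : s.natAbs < r := by omega
    exact_mod_cast this

lemma ordGE_toL_zero (f : PowerSeries k) : ordGE (toL f) 0 := by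
  rw [ordGE_iff]
  intro s hs
  rw [toL_coeff, if_pos hs]

lemma order_toL {f : PowerSeries k} {r : ℕ} (h : f.order = (r : ℕ∞)) :
    (toL f).order = (r : ℤ) := by
  rw [PowerSeries.order_eq_nat] at h
  obtain ⟨h1, h2⟩ := h
  have hne : toL f ≠ 0 := by
    intro h0
    apply h1
    have := congrArg (fun z => HahnSeries.coeff z (r : ℤ)) h0
    simpa [toL_coeff] using this
  refine le_antisymm ?_ ?_
  · apply HahnSeries.order_le_of_coeff_ne_zero
    simpa [toL_coeff] using h1
  · by_contra hlt
    push_neg at hlt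
    have hco := HahnSeries.coeff_order_eq_zero.not.mpr hne
    apply hco
    rw [toL_coeff]
    split_ifs with h0
    · rfl
    · apply h2
      omega

end Stmt11

namespace Stmt11
variable {k : Type} [Field k]

lemma constantCoeff_sigmaX (σ : PowerSeries k ≃ₐ[k] PowerSeries k) :
    constantCoeff (σ X) = 0 := by
  by_contra h
  have hu : IsUnit (σ X) :=
    PowerSeries.isUnit_iff_constantCoeff.mpr (isUnit_iff_ne_zero.mpr h)
  have hX : IsUnit (X : PowerSeries k) := by
    have := hu.map σ.symm
    simpa using this
  have := PowerSeries.isUnit_iff_constantCoeff.mp hX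
  simp at this

/-- auxiliary "chain-rule defect" -/
noncomputable def hfun (σ : PowerSeries k ≃ₐ[k] PowerSeries k) (x : PowerSeries k) :
    PowerSeries k :=
  derivative k (σ x) - derivative k (σ X) * σ (derivative k x)

lemma hfun_add (σ : PowerSeries k ≃ₐ[k] PowerSeries k) (x y : PowerSeries k) :
    hfun σ (x + y) = hfun σ x + hfun σ y := by
  simp only [hfun, map_add]
  ring

lemma hfun_mul (σ : PowerSeries k ≃ₐ[k] PowerSeries k) (x y : PowerSeries k) :
    hfun σ (x * y) = σ x * hfun σ y + σ y * hfun σ x := by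
  simp only [hfun, map_mul, Derivation.leibniz, smul_eq_mul, map_add]
  ring

lemma hfun_C (σ : PowerSeries k ≃ₐ[k] PowerSeries k) (a : k) :
    hfun σ (PowerSeries.C a) = 0 := by
  have hC : σ (PowerSeries.C a) = PowerSeries.C a := by
    rw [PowerSeries.C_eq_algebraMap]
    exact σ.commutes a
  simp [hfun, hC]

lemma hfun_X (σ : PowerSeries k ≃ₐ[k] PowerSeries k) :
    hfun σ (X : PowerSeries k) = 0 := by
  simp [hfun]

lemma hfun_poly (σ : PowerSeries k ≃ₐ[k] PowerSeries k) (P : Polynomial k) :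
    hfun σ (P : PowerSeries k) = 0 := by
  induction P using Polynomial.induction_on with
  | C a => rw [Polynomial.coe_C]; exact hfun_C σ a
  | add p q hp hq => rw [Polynomial.coe_add, hfun_add, hp, hq, add_zero]
  | monomial n a hn =>
      have : ((Polynomial.C a * Polynomial.X ^ (n + 1) : Polynomial k) : PowerSeries k)
          = ((Polynomial.C a * Polynomial.X ^ n : Polynomial k) : PowerSeries k) * X := by
        push_cast
        ring
      rw [this, hfun_mul, hn, hfun_X]
      simp

lemma hfun_eq_zero (σ : PowerSeries k ≃ₐ[k] PowerSeries k) (x : PowerSeries k) :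
    hfun σ x = 0 := by
  ext n
  set N := n + 1 with hN
  have hdvd : (X : PowerSeries k) ^ N ∣ (x - ↑(trunc N x)) := by
    rw [PowerSeries.X_pow_dvd_iff]
    intro m hm
    simp [map_sub, Polynomial.coeff_coe, PowerSeries.coeff_trunc, hm]
  obtain ⟨y, hy⟩ := hdvd
  have hx : x = X ^ N * y + ((trunc N x : Polynomial k) : PowerSeries k) :=
    sub_eq_iff_eq_add.mp hy
  have hXpow : hfun σ ((X : PowerSeries k) ^ N) = 0 := by
    have := hfun_poly σ ((Polynomial.X : Polynomial k) ^ N)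
    rwa [Polynomial.coe_pow, Polynomial.coe_X] at this
  have hstep : hfun σ x = σ X ^ N * hfun σ y := by
    rw [hx, hfun_add, hfun_poly σ (trunc N x), add_zero, hfun_mul, hXpow, mul_zero, add_zero,
      map_pow]
  rw [hstep]
  have hdvd2 : (X : PowerSeries k) ^ N ∣ σ X ^ N * hfun σ y := by
    exact Dvd.dvd.mul_right (pow_dvd_pow_of_dvd
      (PowerSeries.X_dvd_iff.mpr (constantCoeff_sigmaX σ)) N) _
  rw [PowerSeries.X_pow_dvd_iff] at hdvd2
  simp [hdvd2 n (by omega)]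

lemma chainRule (σ : PowerSeries k ≃ₐ[k] PowerSeries k) (x : PowerSeries k) :
    derivative k (σ x) = derivative k (σ X) * σ (derivative k x) := by
  have := hfun_eq_zero σ x
  rw [hfun, sub_eq_zero] at this
  exact this

lemma derivative_prod {ι : Type*} [DecidableEq ι] (s : Finset ι) (f : ι → PowerSeries k) :
    derivative k (∏ i ∈ s, f i)
      = ∑ i ∈ s, derivative k (f i) * ∏ j ∈ s.erase i, f j := by
  induction s using Finset.induction_on with
  | empty => simp
  | insert a s' hni ih =>
    have hsum : ∀ i ∈ s', derivative k (f i) * ∏ j ∈ (insert a s').erase i, f j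
        = f a * (derivative k (f i) * ∏ j ∈ s'.erase i, f j) := by
      intro i hi
      have hia : i ≠ a := fun h => hni (h ▸ hi)
      rw [Finset.erase_insert_of_ne hia.symm,
        Finset.prod_insert (by simp [Finset.mem_erase, hni])]
      ring
    rw [Finset.prod_insert hni, Derivation.leibniz, smul_eq_mul, smul_eq_mul, ih,
      Finset.sum_insert hni, Finset.erase_insert hni, Finset.sum_congr rfl hsum,
      ← Finset.mul_sum]
    ring

end Stmt11
namespace Stmt11
variable {k : Type} [Field k]

lemma toL_mul (a b : PowerSeries k) : toL (a * b) = toL a * toL b := by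
  unfold toL; exact map_mul _ a b

lemma one_le_order_sigmaX (σ : PowerSeries k ≃ₐ[k] PowerSeries k) :
    1 ≤ (σ (X : PowerSeries k)).order := by
  apply PowerSeries.nat_le_order
  intro i hi
  interval_cases i
  rw [PowerSeries.coeff_zero_eq_constantCoeff]
  exact constantCoeff_sigmaX σ

lemma card_le_order_prod {ι : Type*} [DecidableEq ι] (s : Finset ι) (f : ι → PowerSeries k)
    (h : ∀ i ∈ s, 1 ≤ (f i).order) : (s.card : ℕ∞) ≤ (∏ i ∈ s, f i).order := by
  induction s using Finset.induction_on with
  | empty => simp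
  | insert a s' hni ih =>
    rw [Finset.prod_insert hni, Finset.card_insert_of_notMem hni]
    refine le_trans ?_ (PowerSeries.le_order_mul _ _)
    push_cast
    rw [add_comm]
    exact add_le_add (h a (Finset.mem_insert_self a s'))
      (ih fun i hi => h i (Finset.mem_insert_of_mem hi))

end Stmt11

open Stmt11

/-- **effective additive Hilbert 90.**  Let `d = ord(y_G')` and let
`m ≥ n` be integers with `m − n ≥ d − #G + 1`, defining fractional ideals
`I = t^m·k[[t]] ⊆ J = t^n·k[[t]]`.  Then every `1`-cocycle of `G` with values in `I` is
split by an element of `J`: if `a_{gh} = ρ(g)(a_h) + a_g` and `ord(a_g) ≥ m` for all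
`g`, then there is `α` with `ord(α) ≥ n` and `a_g = ρ(g)(α) − α` for all `g`.
In particular the natural map `H¹(G, I) → H¹(G, J)` is zero. -/
theorem statement11
    (p : ℕ) [Fact p.Prime]
    (k : Type) [Field k] [CharP k p] [PerfectField k]
    (G : Type) [Group G] [Fintype G]
    (ρ : G →* (PowerSeries k ≃ₐ[k] PowerSeries k)) (hρ : Function.Injective ρ)
    (ρL : G →* (LaurentSeries k ≃ₐ[k] LaurentSeries k))
    (hρL : ∀ g x, ρL g (toL x) = toL (ρ g x))
    (yG : PowerSeries k) (hyG : yG = ∏ g : G, ρ g PowerSeries.X)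
    (d : ℕ) (hd : (PowerSeries.derivative k yG).order = (d : ℕ∞))
    (m n : ℤ) (hmn : n ≤ m) (hbound : (d : ℤ) - (Fintype.card G : ℤ) + 1 ≤ m - n)
    (a : G → LaurentSeries k)
    (ha : ∀ g h : G, a (g * h) = ρL g (a h) + a g)
    (haI : ∀ g : G, ordGE (a g) m) :
    ∃ α : LaurentSeries k, ordGE α n ∧ ∀ g : G, a g = ρL g α - α := by
  classical
  set e := Fintype.card G with he
  have hepos : 0 < e := Fintype.card_pos
  have hyG'ne : PowerSeries.derivative k yG ≠ 0 := by
    intro h0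
    rw [h0, PowerSeries.order_zero] at hd
    exact (by simp : (⊤ : ℕ∞) ≠ (d : ℕ∞)) hd
  -- invariance of yG
  have hinv : ∀ g : G, ρ g yG = yG := by
    intro g
    rw [hyG, map_prod]
    calc ∏ h : G, ρ g (ρ h X)
        = ∏ h : G, ρ (g * h) X := by
          apply Finset.prod_congr rfl
          intro h _
          rw [map_mul, AlgEquiv.mul_apply]
      _ = ∏ u : G, ρ u X := Fintype.prod_equiv (Equiv.mulLeft g) _ _ (fun h => rfl)
  -- chain rule applied to yG
  have hK2 : ∀ g : G, PowerSeries.derivative k yG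
      = PowerSeries.derivative k (ρ g X) * ρ g (PowerSeries.derivative k yG) := by
    intro g
    conv_lhs => rw [← hinv g]
    exact chainRule (ρ g) yG
  -- product rule
  have hK3 : PowerSeries.derivative k yG
      = ∑ g : G, PowerSeries.derivative k (ρ g X) * ∏ h ∈ Finset.univ.erase g, ρ h X := by
    rw [hyG]
    exact derivative_prod Finset.univ _
  -- nonvanishing facts
  have hFgne : ∀ g : G, toL (ρ g X) ≠ 0 := by
    intro g
    apply toL_ne_zero
    intro h0
    exact PowerSeries.X_ne_zero ((ρ g).injective (by rw [h0, map_zero]))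
  have hQgne : ∀ g : G, toL (ρ g (PowerSeries.derivative k yG)) ≠ 0 := by
    intro g
    apply toL_ne_zero
    intro h0
    exact hyG'ne ((ρ g).injective (by rw [h0, map_zero]))
  have hFg'psne : ∀ g : G, PowerSeries.derivative k (ρ g X) ≠ 0 := by
    intro g h0
    apply hyG'ne
    rw [hK2 g, h0, zero_mul]
  have hFg'ne : ∀ g : G, toL (PowerSeries.derivative k (ρ g X)) ≠ 0 :=
    fun g => toL_ne_zero (hFg'psne g)
  have hyG'Lne : toL (PowerSeries.derivative k yG) ≠ 0 := toL_ne_zero hyG'ne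
  -- the splitting element
  set c : LaurentSeries k :=
    toL yG * (toL PowerSeries.X * toL (PowerSeries.derivative k yG))⁻¹ with hc
  have hρLc : ∀ g : G, ρL g c
      = toL (PowerSeries.derivative k (ρ g X))
        * toL (∏ h ∈ Finset.univ.erase g, ρ h X)
        * (toL (PowerSeries.derivative k yG))⁻¹ := by
    intro g
    have h1 : toL (PowerSeries.derivative k yG)
        = toL (PowerSeries.derivative k (ρ g X)) * toL (ρ g (PowerSeries.derivative k yG)) := by
      rw [← toL_mul, ← hK2 g]
    have h2 : toL yG = toL (ρ g X) * toL (∏ h ∈ Finset.univ.erase g, ρ h X) := by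
      rw [hyG, ← Finset.mul_prod_erase Finset.univ (fun h => ρ h X) (Finset.mem_univ g), toL_mul]
    have hmapc : ρL g c = toL yG * (toL (ρ g X) * toL (ρ g (PowerSeries.derivative k yG)))⁻¹ := by
      rw [hc, map_mul, map_inv₀, map_mul, hρL, hρL, hρL, hinv g]
    have aux_cancel : ∀ A P Q : LaurentSeries k, A ≠ 0 → A * P * (A * Q)⁻¹ = P * Q⁻¹ := by
      intro A P Q hA
      calc A * P * (A * Q)⁻¹ = (A * A⁻¹) * (P * Q⁻¹) := by rw [mul_inv]; ring
        _ = P * Q⁻¹ := by rw [mul_inv_cancel₀ hA, one_mul]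
    rw [hmapc, h2, h1, aux_cancel _ _ _ (hFgne g), aux_cancel _ _ _ (hFg'ne g)]
  -- the trace of c is 1
  have htr : ∑ g : G, ρL g c = 1 := by
    have hstep : ∑ g : G, ρL g c
        = toL (∑ g : G, PowerSeries.derivative k (ρ g X) * ∏ h ∈ Finset.univ.erase g, ρ h X)
          * (toL (PowerSeries.derivative k yG))⁻¹ := by
      rw [show toL (∑ g : G, PowerSeries.derivative k (ρ g X)
            * ∏ h ∈ Finset.univ.erase g, ρ h X)
          = ∑ g : G, toL (PowerSeries.derivative k (ρ g X)
            * ∏ h ∈ Finset.univ.erase g, ρ h X) from map_sum _ _ _,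
        Finset.sum_mul]
      exact Finset.sum_congr rfl fun g _ => by rw [hρLc g, toL_mul]
    rw [hstep, ← hK3, mul_inv_cancel₀ hyG'Lne]
  -- order bound for ρL g c
  have hordc : ∀ g : G, ordGE (ρL g c) ((e : ℤ) - 1 - d) := by
    intro g
    rw [hρLc g]
    have h1 : ordGE (toL (PowerSeries.derivative k (ρ g X))) 0 := ordGE_toL_zero _
    have h2 : ordGE (toL (∏ h ∈ Finset.univ.erase g, ρ h X)) ((e : ℤ) - 1) := by
      have horder : ((e - 1 : ℕ) : ℕ∞) ≤ (∏ h ∈ Finset.univ.erase g, ρ h X).order := by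
        have := card_le_order_prod (Finset.univ.erase g) (fun h => ρ h X)
          (fun i _ => one_le_order_sigmaX (ρ i))
        rwa [Finset.card_erase_of_mem (Finset.mem_univ g), Finset.card_univ] at this
      have := ordGE_toL horder
      have hcast : ((e - 1 : ℕ) : ℤ) = (e : ℤ) - 1 := by omega
      rwa [hcast] at this
    have h3 : ordGE (toL (PowerSeries.derivative k yG))⁻¹ (-(d : ℤ)) := by
      apply ordGE_of_order_eq
      rw [order_inv hyG'Lne, order_toL hd]
    have := ordGE_mul (ordGE_mul h1 h2) h3
    apply ordGE_mono (le_of_eq (by ring)) this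
  -- the element α
  refine ⟨-∑ h : G, ρL h c * a h, ?_, ?_⟩
  · apply ordGE_neg
    apply ordGE_sum
    intro h _
    apply ordGE_mono ?_ (ordGE_mul (hordc h) (haI h))
    have hb : (d : ℤ) - (e : ℤ) + 1 ≤ m - n := hbound
    linarith
  · intro g
    have hmap : ρL g (-∑ h : G, ρL h c * a h)
        = -∑ h : G, ρL (g * h) c * (a (g * h) - a g) := by
      rw [map_neg, map_sum]
      congr 1
      apply Finset.sum_congr rfl
      intro h _
      rw [map_mul]
      congr 1
      · rw [← AlgEquiv.mul_apply, ← map_mul]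
      · rw [ha g h]; ring
    rw [hmap]
    have hre1 : ∑ h : G, ρL (g * h) c * a (g * h) = ∑ u : G, ρL u c * a u :=
      Fintype.sum_equiv (Equiv.mulLeft g) _ _ (fun h => rfl)
    have hre2 : ∑ h : G, ρL (g * h) c * a g = a g := by
      have hre0 : ∑ h : G, ρL (g * h) c = ∑ u : G, ρL u c :=
        Fintype.sum_equiv (Equiv.mulLeft g) _ _ (fun h => rfl)
      rw [← Finset.sum_mul, hre0, htr, one_mul]
    have hsplit : ∑ h : G, ρL (g * h) c * (a (g * h) - a g)
        = (∑ u : G, ρL u c * a u) - a g := by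
      simp_rw [mul_sub]
      rw [Finset.sum_sub_distrib, hre1, hre2]
    rw [hsplit]
    ring
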